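/- There exists a probability space and σ-fields for which the exchange of countable intersection and supremum fails: with (ξ_k)_{k∈ℤ} i.i.d. Bernoulli(1/2) and Y_n = |ξ_n − ξ_{n−1}|, the σ-field ⋂_{n≤0}(σ{Y_k : k≤0} ∨ σ{ξ_k : k≤n}) strictly contains (up to null sets) σ{Y_k : k≤0} ∨ ⋂_{n≤0}σ{ξ_k : k≤n}. -/

import Mathlib

open MeasureTheory ProbabilityTheory
open scoped symmDiff

noncomputable def mu0 : Measure ℤ :=
  (1/2 : ENNReal) • Measure.dirac (0 : ℤ) + (1/2 : ENNReal) • Measure.dirac (1 : ℤ)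

instance : IsProbabilityMeasure mu0 := by
  constructor; simp [mu0]; rw [ENNReal.inv_two_add_inv_two]

lemma mu0_flip (u : Set ℤ) : mu0 ((fun z : ℤ => 1 - z) ⁻¹' u) = mu0 u := by
  by_cases hu0 : (0:ℤ) ∈ u <;> by_cases hu1 : (1:ℤ) ∈ u <;>
    simp [mu0, Measure.dirac_apply, Set.indicator, Set.mem_preimage, hu0, hu1, add_comm]

lemma mu0_odd : mu0 {z : ℤ | z % 2 = 1} = 1/2 := by
  have h0 : (0:ℤ) ∉ {z : ℤ | z % 2 = 1} := by simp
  have h1 : (1:ℤ) ∈ {z : ℤ | z % 2 = 1} := by simp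
  simp [mu0, Measure.dirac_apply, Set.indicator, h0, h1]

lemma parity_id {Ω : Type*} (ξ : ℤ → Ω → ℤ) (Y : ℤ → Ω → ℤ)
    (hY : ∀ n ω, Y n ω = |ξ n ω - ξ (n-1) ω|) (n : ℤ) (hn : n ≤ 0) (ω : Ω) :
    (ξ n ω + ∑ k ∈ Finset.Icc (n+1) 0, Y k ω) % 2 = ξ 0 ω % 2 := by
  refine Int.le_induction_down
    (motive := fun n _ => ∀ ω, (ξ n ω + ∑ k ∈ Finset.Icc (n+1) 0, Y k ω) % 2 = ξ 0 ω % 2)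
    ?_ ?_ n hn ω
  · intro ω
    have : Finset.Icc (0+1 : ℤ) 0 = ∅ := by
      apply Finset.Icc_eq_empty; omega
    simp [this]
  · intro m hm ih ω
    have hins : Finset.Icc (m - 1 + 1) 0 = insert m (Finset.Icc (m+1) 0) := by
      ext x; simp only [Finset.mem_Icc, Finset.mem_insert]; omega
    have hnotm : m ∉ Finset.Icc (m+1) 0 := by simp [Finset.mem_Icc]
    rw [hins, Finset.sum_insert hnotm, hY m ω]
    have ihω := ih ω
    rcases abs_cases (ξ m ω - ξ (m-1) ω) with ⟨h1, -⟩ | ⟨h1, -⟩ <;> omega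

lemma approx_lemma {Ω : Type*} [inst : MeasurableSpace Ω] (P : Measure Ω) [IsProbabilityMeasure P]
    (m₁ m₂ : MeasurableSpace Ω) (h₂ : m₂ ≤ inst)
    (htriv : ∀ D, MeasurableSet[m₂] D → P D = 0 ∨ P D = 1) :
    ∀ B, MeasurableSet[m₁ ⊔ m₂] B → ∃ C, MeasurableSet[m₁] C ∧ P (B ∆ C) = 0 := by
  let m' : MeasurableSpace Ω :=
  { MeasurableSet' := fun s => ∃ C, MeasurableSet[m₁] C ∧ P (s ∆ C) = 0
    measurableSet_empty := ⟨∅, @MeasurableSet.empty _ m₁, by simp⟩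
    measurableSet_compl := fun s hs => by
      obtain ⟨C, hC, h0⟩ := hs
      exact ⟨Cᶜ, hC.compl, by rwa [compl_symmDiff_compl]⟩
    measurableSet_iUnion := fun f hf => by
      choose C hC h0 using hf
      refine ⟨⋃ i, C i, MeasurableSet.iUnion hC, ?_⟩
      have hsub : (⋃ i, f i) ∆ (⋃ i, C i) ⊆ ⋃ i, f i ∆ C i := by
        intro x hx
        rw [Set.mem_symmDiff] at hx
        rcases hx with ⟨hfi, hnc⟩ | ⟨hci, hnf⟩
        · obtain ⟨i, hfi⟩ := Set.mem_iUnion.1 hfi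
          exact Set.mem_iUnion.2 ⟨i, Set.mem_symmDiff.2
            (Or.inl ⟨hfi, fun h => hnc (Set.mem_iUnion.2 ⟨i, h⟩)⟩)⟩
        · obtain ⟨i, hci⟩ := Set.mem_iUnion.1 hci
          exact Set.mem_iUnion.2 ⟨i, Set.mem_symmDiff.2
            (Or.inr ⟨hci, fun h => hnf (Set.mem_iUnion.2 ⟨i, h⟩)⟩)⟩
      have h1 : P ((⋃ i, f i) ∆ (⋃ i, C i)) ≤ ∑' i, P (f i ∆ C i) :=
        le_trans (measure_mono hsub) (measure_iUnion_le _)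
      have h2 : ∑' i, P (f i ∆ C i) = 0 := by simp [h0]
      exact le_antisymm (h2 ▸ h1) (zero_le) }
  have h1 : m₁ ≤ m' := fun s hs => ⟨s, hs, by simp⟩
  have h2 : m₂ ≤ m' := by
    intro s hs
    rcases htriv s hs with h | h
    · refine ⟨∅, @MeasurableSet.empty _ m₁, ?_⟩
      have : s ∆ (∅ : Set Ω) = s := by simp
      rw [this]; exact h
    · refine ⟨Set.univ, @MeasurableSet.univ _ m₁, ?_⟩
      have : s ∆ (Set.univ : Set Ω) = sᶜ := by
        simp [Set.symmDiff_def, Set.compl_eq_univ_diff]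
      rw [this]
      exact (prob_compl_eq_zero_iff (h₂ s hs)).2 h
  exact fun B hB => (sup_le h1 h2) B hB

lemma map_pi {Ω : Type*} [MeasurableSpace Ω] (P : Measure Ω) [IsProbabilityMeasure P]
    (ξ : ℤ → Ω → ℤ) (hmeas : ∀ k, Measurable (ξ k))
    (hindep : iIndepFun ξ P)
    (hlaw : ∀ k, Measure.map (ξ k) P = mu0) (S : Finset ℤ) :
    Measure.map (fun ω (j : S) => ξ j.1 ω) P = Measure.pi (fun _ => mu0) := by
  have hV : Measurable (fun ω (j : S) => ξ j.1 ω) :=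
    measurable_pi_lambda _ fun j => hmeas j.1
  refine (Measure.pi_eq (μ := fun _ : S => mu0) fun s hs => ?_).symm
  classical
  set sets : ℤ → Set ℤ := fun j => if h : j ∈ S then s ⟨j, h⟩ else Set.univ with hsets
  have hpre : (fun ω (j : S) => ξ j.1 ω) ⁻¹' (Set.univ.pi s) = ⋂ j ∈ S, ξ j ⁻¹' (sets j) := by
    ext ω
    simp only [Set.mem_preimage, Set.mem_univ_pi, Set.mem_iInter]
    constructor
    · intro h j hj
      simp only [hsets, dif_pos hj, Set.mem_preimage]
      exact h ⟨j, hj⟩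
    · intro h j
      have := h j.1 j.2
      simpa only [hsets, dif_pos j.2, Set.mem_preimage, Subtype.coe_eta] using this
  rw [Measure.map_apply hV (MeasurableSet.univ_pi fun i => .of_discrete), hpre,
    hindep.measure_inter_preimage_eq_mul S (fun i _ => .of_discrete)]
  have hterm : ∀ j ∈ S, P (ξ j ⁻¹' sets j) = mu0 (sets j) := fun j _ => by
    rw [← hlaw j, Measure.map_apply (hmeas j) .of_discrete]
  rw [Finset.prod_congr rfl hterm]
  calc ∏ j ∈ S, mu0 (sets j) = ∏ j ∈ S.attach, mu0 (sets j.1) :=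
        (Finset.prod_attach S fun j => mu0 (sets j)).symm
    _ = ∏ i : S, mu0 (s i) := by
        rw [Finset.univ_eq_attach]
        exact Finset.prod_congr rfl fun i _ => by simp [sets]

lemma flip_pi (S : Finset ℤ) :
    Measure.map (fun x (j : S) => 1 - x j) (Measure.pi (fun _ : S => mu0)) =
      Measure.pi (fun _ : S => mu0) := by
  have hg : Measurable (fun (x : S → ℤ) (j : S) => 1 - x j) :=
    measurable_pi_lambda _ fun j => measurable_const.sub (measurable_pi_apply j)
  refine (Measure.pi_eq (μ := fun _ : S => mu0) fun s hs => ?_).symm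
  rw [Measure.map_apply hg (MeasurableSet.univ_pi fun i => .of_discrete)]
  have : (fun (x : S → ℤ) (j : S) => 1 - x j) ⁻¹' (Set.univ.pi s)
      = Set.univ.pi (fun j => (fun z : ℤ => 1 - z) ⁻¹' s j) := by
    ext x; simp [Set.mem_univ_pi]
  rw [this, Measure.pi_pi]
  exact Finset.prod_congr rfl fun j _ => mu0_flip (s j)
lemma key_indep {Ω : Type*} [inst : MeasurableSpace Ω] (P : Measure Ω) [IsProbabilityMeasure P]
    (ξ : ℤ → Ω → ℤ) (hmeas : ∀ k, Measurable (ξ k))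
    (hindep : iIndepFun ξ P)
    (hlaw : ∀ k, Measure.map (ξ k) P = mu0)
    (Y : ℤ → Ω → ℤ) (hY : ∀ n ω, Y n ω = |ξ n ω - ξ (n-1) ω|)
    (t : Finset {k : ℤ // k ≤ 0}) (f : {k : ℤ // k ≤ 0} → Set Ω)
    (hf : ∀ i ∈ t, MeasurableSet[MeasurableSpace.comap (Y i.1) inferInstance] (f i)) :
    P ({ω | ξ 0 ω % 2 = 1} ∩ ⋂ i ∈ t, f i)
      = P {ω | ξ 0 ω % 2 = 1} * P (⋂ i ∈ t, f i) := by
  classical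
  have hch : ∀ i ∈ t, ∃ u : Set ℤ, Y i.1 ⁻¹' u = f i := by
    intro i hi; rcases hf i hi with ⟨u, -, hu⟩; exact ⟨u, hu⟩
  choose u hu using hch
  set S : Finset ℤ := insert 0 ((t.image fun i => i.1) ∪ (t.image fun i => i.1 - 1)) with hS
  have h0S : (0:ℤ) ∈ S := Finset.mem_insert_self _ _
  have hiS : ∀ i ∈ t, i.1 ∈ S := fun i hi =>
    Finset.mem_insert_of_mem (Finset.mem_union_left _ (Finset.mem_image_of_mem _ hi))
  have hi1S : ∀ i ∈ t, i.1 - 1 ∈ S := fun i hi =>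
    Finset.mem_insert_of_mem (Finset.mem_union_right _ (Finset.mem_image_of_mem _ hi))
  set V : Ω → (S → ℤ) := fun ω j => ξ j.1 ω with hVdef
  have hV : Measurable V := measurable_pi_lambda _ fun j => hmeas j.1
  set val : (S → ℤ) → ℤ → ℤ := fun x j => if h : j ∈ S then x ⟨j, h⟩ else 0 with hvaldef
  have hval : ∀ j, Measurable fun x : S → ℤ => val x j := by
    intro j
    by_cases h : j ∈ S
    · have : (fun x : S → ℤ => val x j) = fun x => x ⟨j, h⟩ := by
        funext x; simp [hvaldef, dif_pos h]
      rw [this]; exact measurable_pi_apply _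
    · have : (fun x : S → ℤ => val x j) = fun _ => 0 := by
        funext x; simp [hvaldef, dif_neg h]
      rw [this]; exact measurable_const
  have hvalV : ∀ (ω : Ω) (j : ℤ), j ∈ S → val (V ω) j = ξ j ω := by
    intro ω j h; simp [hvaldef, hVdef, dif_pos h]
  set D1 : Set (S → ℤ) := {x | val x 0 % 2 = 1} with hD1def
  set D2 : Set (S → ℤ) := {x | ∀ i, ∀ hi : i ∈ t, |val x i.1 - val x (i.1 - 1)| ∈ u i hi}
    with hD2def
  have hD1 : MeasurableSet D1 := by
    have : D1 = (fun x => val x 0 % 2) ⁻¹' {1} := by ext x; simp [hD1def]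
    rw [this]
    have hm : Measurable fun x : S → ℤ => val x 0 % 2 :=
      (Measurable.of_discrete (f := fun z : ℤ => z % 2)).comp (hval 0)
    exact hm .of_discrete
  have hD2 : MeasurableSet D2 := by
    have : D2 = ⋂ i, ⋂ hi : i ∈ t, {x : S → ℤ | |val x i.1 - val x (i.1-1)| ∈ u i hi} := by
      ext x; simp only [hD2def, Set.mem_iInter, Set.mem_setOf_eq]
    rw [this]
    refine MeasurableSet.iInter fun i => MeasurableSet.iInter fun hi => ?_
    have hm : Measurable fun x : S → ℤ => |val x i.1 - val x (i.1-1)| :=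
      (Measurable.of_discrete (f := fun z : ℤ => |z|)).comp ((hval i.1).sub (hval (i.1-1)))
    exact hm .of_discrete
  have hmemf : ∀ (ω : Ω) i (hi : i ∈ t), ω ∈ f i ↔ |ξ i.1 ω - ξ (i.1-1) ω| ∈ u i hi := by
    intro ω i hi
    rw [← hu i hi, Set.mem_preimage, hY i.1 ω]
  have hpre1 : V ⁻¹' (D1 ∩ D2) = {ω | ξ 0 ω % 2 = 1} ∩ ⋂ i ∈ t, f i := by
    ext ω
    simp only [Set.mem_preimage, Set.mem_inter_iff, hD1def, hD2def, Set.mem_setOf_eq,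
      Set.mem_iInter]
    rw [hvalV ω 0 h0S]
    refine and_congr Iff.rfl (forall_congr' fun i => forall_congr' fun hi => ?_)
    rw [hvalV ω i.1 (hiS i hi), hvalV ω (i.1-1) (hi1S i hi), hmemf ω i hi]
  have hpre2 : V ⁻¹' (D1ᶜ ∩ D2) = {ω | ξ 0 ω % 2 = 1}ᶜ ∩ ⋂ i ∈ t, f i := by
    ext ω
    simp only [Set.mem_preimage, Set.mem_inter_iff, Set.mem_compl_iff, hD1def, hD2def,
      Set.mem_setOf_eq, Set.mem_iInter]
    rw [hvalV ω 0 h0S]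
    refine and_congr Iff.rfl (forall_congr' fun i => forall_congr' fun hi => ?_)
    rw [hvalV ω i.1 (hiS i hi), hvalV ω (i.1-1) (hi1S i hi), hmemf ω i hi]
  have hmap := map_pi P ξ hmeas hindep hlaw S
  have hPAC : P ({ω | ξ 0 ω % 2 = 1} ∩ ⋂ i ∈ t, f i)
      = Measure.pi (fun _ : S => mu0) (D1 ∩ D2) := by
    rw [← hpre1, ← hmap, Measure.map_apply hV (hD1.inter hD2)]
  have hPAcC : P ({ω | ξ 0 ω % 2 = 1}ᶜ ∩ ⋂ i ∈ t, f i)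
      = Measure.pi (fun _ : S => mu0) (D1ᶜ ∩ D2) := by
    rw [← hpre2, ← hmap, Measure.map_apply hV (hD1.compl.inter hD2)]
  have hg : Measurable (fun (x : S → ℤ) (j : S) => 1 - x j) :=
    measurable_pi_lambda _ fun j => measurable_const.sub (measurable_pi_apply j)
  have hvalg : ∀ (x : S → ℤ) (j : ℤ) (h : j ∈ S),
      val ((fun (x : S → ℤ) (j : S) => 1 - x j) x) j = 1 - val x j := by
    intro x j h; simp [hvaldef, dif_pos h]
  have hgpre : (fun (x : S → ℤ) (j : S) => 1 - x j) ⁻¹' (D1ᶜ ∩ D2) = D1 ∩ D2 := by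
    ext x
    simp only [Set.mem_preimage, Set.mem_inter_iff, Set.mem_compl_iff, hD1def, hD2def,
      Set.mem_setOf_eq]
    rw [hvalg x 0 h0S]
    have habs : ∀ i : {k : ℤ // k ≤ 0}, i ∈ t →
        |(1 - val x i.1) - (1 - val x (i.1-1))| = |val x i.1 - val x (i.1-1)| := by
      intro i hi
      rw [show (1 - val x i.1) - (1 - val x (i.1-1)) = -(val x i.1 - val x (i.1-1)) by ring,
        abs_neg]
    constructor
    · rintro ⟨h1, h2⟩
      refine ⟨by omega, fun i hi => ?_⟩
      have := h2 i hi
      rw [hvalg x i.1 (hiS i hi), hvalg x (i.1-1) (hi1S i hi), habs i hi] at this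
      exact this
    · rintro ⟨h1, h2⟩
      refine ⟨by omega, fun i hi => ?_⟩
      rw [hvalg x i.1 (hiS i hi), hvalg x (i.1-1) (hi1S i hi), habs i hi]
      exact h2 i hi
  have hflip : Measure.pi (fun _ : S => mu0) (D1 ∩ D2)
      = Measure.pi (fun _ : S => mu0) (D1ᶜ ∩ D2) := by
    conv_rhs => rw [← flip_pi S]
    rw [Measure.map_apply hg (hD1.compl.inter hD2), hgpre]
  have heq : P ({ω | ξ 0 ω % 2 = 1} ∩ ⋂ i ∈ t, f i)
      = P ({ω | ξ 0 ω % 2 = 1}ᶜ ∩ ⋂ i ∈ t, f i) := by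
    rw [hPAC, hflip, ← hPAcC]
  have hA : MeasurableSet {ω | ξ 0 ω % 2 = 1} := by
    have : {ω | ξ 0 ω % 2 = 1} = (fun ω => ξ 0 ω % 2) ⁻¹' {1} := by
      ext ω; simp
    rw [this]
    have hm : Measurable fun ω => ξ 0 ω % 2 :=
      (Measurable.of_discrete (f := fun z : ℤ => z % 2)).comp (hmeas 0)
    exact hm .of_discrete
  have hsplit : P ({ω | ξ 0 ω % 2 = 1} ∩ ⋂ i ∈ t, f i)
      + P ({ω | ξ 0 ω % 2 = 1}ᶜ ∩ ⋂ i ∈ t, f i) = P (⋂ i ∈ t, f i) := by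
    have h := measure_inter_add_diff (μ := P) (⋂ i ∈ t, f i) hA
    rw [Set.inter_comm] at h
    rw [← h, Set.diff_eq, Set.inter_comm _ ({ω | ξ 0 ω % 2 = 1}ᶜ)]
  have hPA : P {ω | ξ 0 ω % 2 = 1} = 1/2 := by
    have h1 : {ω | ξ 0 ω % 2 = 1} = ξ 0 ⁻¹' {z : ℤ | z % 2 = 1} := rfl
    rw [h1, ← Measure.map_apply (hmeas 0) .of_discrete, hlaw 0, mu0_odd]
  have h2x : P (⋂ i ∈ t, f i) = 2 * P ({ω | ξ 0 ω % 2 = 1} ∩ ⋂ i ∈ t, f i) := by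
    rw [← hsplit, ← heq, two_mul]
  rw [hPA, h2x, ← mul_assoc]
  have : (1/2 : ENNReal) * 2 = 1 := by
    rw [one_div, ENNReal.inv_mul_cancel two_ne_zero ENNReal.ofNat_ne_top]
  rw [this, one_mul]
lemma key_indep' {Ω : Type*} [inst : MeasurableSpace Ω] (P : Measure Ω) [IsProbabilityMeasure P]
    (ξ : ℤ → Ω → ℤ) (hmeas : ∀ k, Measurable (ξ k))
    (hindep : iIndepFun ξ P)
    (hlaw : ∀ k, Measure.map (ξ k) P = mu0)
    (Y : ℤ → Ω → ℤ) (hY : ∀ n ω, Y n ω = |ξ n ω - ξ (n-1) ω|)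
    (C : Set Ω)
    (hC : MeasurableSet[⨆ k : {k : ℤ // k ≤ 0},
      MeasurableSpace.comap (Y k.1) inferInstance] C) :
    P ({ω | ξ 0 ω % 2 = 1} ∩ C) = P {ω | ξ 0 ω % 2 = 1} * P C := by
  have hYmeas : ∀ k, Measurable (Y k) := fun k => by
    have : Y k = fun ω => |ξ k ω - ξ (k-1) ω| := funext (hY k)
    rw [this]
    exact (Measurable.of_discrete (f := fun z : ℤ => |z|)).comp ((hmeas k).sub (hmeas (k-1)))
  have hA : MeasurableSet {ω | ξ 0 ω % 2 = 1} := by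
    have h1 : {ω | ξ 0 ω % 2 = 1} = (fun ω => ξ 0 ω % 2) ⁻¹' {1} := by ext ω; simp
    rw [h1]
    have hm : Measurable fun ω => ξ 0 ω % 2 :=
      (Measurable.of_discrete (f := fun z : ℤ => z % 2)).comp (hmeas 0)
    exact hm .of_discrete
  have hgen := generateFrom_piiUnionInter_measurableSet
    (fun k : {k : ℤ // k ≤ 0} => MeasurableSpace.comap (Y k.1) inferInstance) Set.univ
  rw [iSup_univ] at hgen
  have hindep2 : Indep (MeasurableSpace.generateFrom {({ω | ξ 0 ω % 2 = 1} : Set Ω)})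
      (⨆ k : {k : ℤ // k ≤ 0}, MeasurableSpace.comap (Y k.1) inferInstance) P := by
    refine IndepSets.indep ?_ ?_ (IsPiSystem.singleton _) ?_ rfl hgen.symm ?_
    · refine MeasurableSpace.generateFrom_le ?_
      rintro s hs
      rw [Set.mem_singleton_iff] at hs
      subst hs
      exact hA
    · exact iSup_le fun k : {k : ℤ // k ≤ 0} => (hYmeas k.1).comap_le
    · exact isPiSystem_piiUnionInter _
        (fun k : {k : ℤ // k ≤ 0} => @MeasurableSpace.isPiSystem_measurableSet Ω
          (MeasurableSpace.comap (Y k.1) inferInstance)) Set.univ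
    · rw [IndepSets_iff]
      rintro t1 t2 ht1 ht2
      rw [Set.mem_singleton_iff] at ht1
      subst ht1
      obtain ⟨t, -, f, hf, rfl⟩ := ht2
      exact key_indep P ξ hmeas hindep hlaw Y hY t f hf
  exact (Indep_iff _ _ _).1 hindep2 _ _
    (MeasurableSpace.measurableSet_generateFrom (Set.mem_singleton _)) hC

lemma tail_triv {Ω : Type*} [inst : MeasurableSpace Ω] (P : Measure Ω) [IsProbabilityMeasure P]
    (ξ : ℤ → Ω → ℤ) (hmeas : ∀ k, Measurable (ξ k))
    (hindep : iIndepFun ξ P) :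
    ∀ D, MeasurableSet[⨅ n : {m : ℤ // m ≤ 0}, ⨆ k : {k : ℤ // k ≤ n.1},
      MeasurableSpace.comap (ξ k.1) inferInstance] D → P D = 0 ∨ P D = 1 := by
  intro D hD
  have hle : (⨅ n : {m : ℤ // m ≤ 0}, ⨆ k : {k : ℤ // k ≤ n.1},
        MeasurableSpace.comap (ξ k.1) inferInstance)
      ≤ Filter.limsup (fun k : ℤ => MeasurableSpace.comap (ξ k) inferInstance)
        Filter.atBot := by
    rw [Filter.limsup_eq_iInf_iSup]
    refine le_iInf₂ fun Sset hS => ?_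
    obtain ⟨a, ha⟩ := Filter.mem_atBot_sets.1 hS
    refine le_trans (iInf_le _ ⟨min a 0, min_le_right a 0⟩) (iSup_le fun k => ?_)
    exact le_iSup₂ (f := fun b (_ : b ∈ Sset) => MeasurableSpace.comap (ξ b) inferInstance)
      k.1 (ha k.1 (le_trans k.2 (min_le_left a 0)))
  exact measure_zero_or_one_of_measurableSet_limsup_atBot
    (fun n => (hmeas n).comap_le) hindep (hle D hD)
lemma A_meas {Ω : Type*} [inst : MeasurableSpace Ω]
    (ξ : ℤ → Ω → ℤ) (Y : ℤ → Ω → ℤ) (hY : ∀ n ω, Y n ω = |ξ n ω - ξ (n-1) ω|)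
    (n : {m : ℤ // m ≤ 0}) :
    MeasurableSet[(⨆ k : {k : ℤ // k ≤ 0}, MeasurableSpace.comap (Y k.1) inferInstance) ⊔
      (⨆ k : {k : ℤ // k ≤ n.1}, MeasurableSpace.comap (ξ k.1) inferInstance)]
      {ω | ξ 0 ω % 2 = 1} := by
  set m' := (⨆ k : {k : ℤ // k ≤ 0}, MeasurableSpace.comap (Y k.1) inferInstance) ⊔
      (⨆ k : {k : ℤ // k ≤ n.1}, MeasurableSpace.comap (ξ k.1) inferInstance) with hm'
  have hξn : Measurable[m'] (ξ n.1) :=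
    Measurable.of_comap_le (le_trans
      (le_iSup (fun k : {k : ℤ // k ≤ n.1} =>
        MeasurableSpace.comap (ξ k.1) inferInstance) ⟨n.1, le_rfl⟩) le_sup_right)
  have hYk : ∀ k : ℤ, k ≤ 0 → Measurable[m'] (Y k) := fun k hk =>
    Measurable.of_comap_le (le_trans
      (le_iSup (fun k : {k : ℤ // k ≤ 0} =>
        MeasurableSpace.comap (Y k.1) inferInstance) ⟨k, hk⟩) le_sup_left)
  have hsum : Measurable[m'] fun ω => ξ n.1 ω + ∑ k ∈ Finset.Icc (n.1+1) 0, Y k ω := by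
    refine Measurable.add hξn ?_
    refine Finset.measurable_sum _ fun k hk => ?_
    refine hYk k ?_
    simp only [Finset.mem_Icc] at hk
    omega
  have hset : {ω | ξ 0 ω % 2 = 1}
      = (fun ω => (ξ n.1 ω + ∑ k ∈ Finset.Icc (n.1+1) 0, Y k ω) % 2) ⁻¹' {1} := by
    ext ω
    simp only [Set.mem_setOf_eq, Set.mem_preimage, Set.mem_singleton_iff]
    rw [parity_id ξ Y hY n.1 n.2 ω]
  rw [hset]
  have hm : Measurable[m'] fun ω => (ξ n.1 ω + ∑ k ∈ Finset.Icc (n.1+1) 0, Y k ω) % 2 :=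
    (Measurable.of_discrete (f := fun z : ℤ => z % 2)).comp hsum
  exact hm .of_discrete

/-- A failure of the exchange of countable intersection and supremum of
σ-fields: with (ξ_k) i.i.d. Bernoulli(1/2) and Y_n = |ξ_n − ξ_{n−1}|, the σ-field
⋂_{n≤0}(σ{Y_k : k≤0} ∨ σ{ξ_k : k≤n}) strictly contains, modulo P-null sets,
σ{Y_k : k≤0} ∨ ⋂_{n≤0}σ{ξ_k : k≤n}. -/
theorem stmt2 {Ω : Type*} [MeasurableSpace Ω] (P : Measure Ω) [IsProbabilityMeasure P]
    (ξ : ℤ → Ω → ℤ) (hmeas : ∀ k, Measurable (ξ k))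
    (hindep : iIndepFun ξ P)
    (hlaw : ∀ k, Measure.map (ξ k) P
      = (1/2 : ENNReal) • Measure.dirac (0 : ℤ) + (1/2 : ENNReal) • Measure.dirac (1 : ℤ))
    (Y : ℤ → Ω → ℤ) (hY : ∀ n ω, Y n ω = |ξ n ω - ξ (n-1) ω|) :
    (((⨆ k : {k : ℤ // k ≤ 0}, MeasurableSpace.comap (Y k.1) inferInstance) ⊔
        ⨅ n : {m : ℤ // m ≤ 0},
          ⨆ k : {k : ℤ // k ≤ n.1}, MeasurableSpace.comap (ξ k.1) inferInstance) ≤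
      ⨅ n : {m : ℤ // m ≤ 0},
        ((⨆ k : {k : ℤ // k ≤ 0}, MeasurableSpace.comap (Y k.1) inferInstance) ⊔
         (⨆ k : {k : ℤ // k ≤ n.1}, MeasurableSpace.comap (ξ k.1) inferInstance))) ∧
    ∃ A : Set Ω,
      MeasurableSet[⨅ n : {m : ℤ // m ≤ 0},
        ((⨆ k : {k : ℤ // k ≤ 0}, MeasurableSpace.comap (Y k.1) inferInstance) ⊔
         (⨆ k : {k : ℤ // k ≤ n.1}, MeasurableSpace.comap (ξ k.1) inferInstance))] A ∧
      ∀ B : Set Ω,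
        MeasurableSet[(⨆ k : {k : ℤ // k ≤ 0}, MeasurableSpace.comap (Y k.1) inferInstance) ⊔
          ⨅ n : {m : ℤ // m ≤ 0},
            ⨆ k : {k : ℤ // k ≤ n.1}, MeasurableSpace.comap (ξ k.1) inferInstance] B →
        P (A ∆ B) ≠ 0 := by
  have hlaw' : ∀ k, Measure.map (ξ k) P = mu0 := hlaw
  have hYmeas : ∀ k, Measurable (Y k) := fun k => by
    have : Y k = fun ω => |ξ k ω - ξ (k-1) ω| := funext (hY k)
    rw [this]
    exact (Measurable.of_discrete (f := fun z : ℤ => |z|)).comp ((hmeas k).sub (hmeas (k-1)))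
  have hA : MeasurableSet {ω : Ω | ξ 0 ω % 2 = 1} := by
    have h1 : {ω : Ω | ξ 0 ω % 2 = 1} = (fun ω => ξ 0 ω % 2) ⁻¹' {1} := by ext ω; simp
    rw [h1]
    exact ((Measurable.of_discrete (f := fun z : ℤ => z % 2)).comp (hmeas 0)) .of_discrete
  have hPA : P {ω : Ω | ξ 0 ω % 2 = 1} = 1/2 := by
    have h1 : {ω : Ω | ξ 0 ω % 2 = 1} = ξ 0 ⁻¹' {z : ℤ | z % 2 = 1} := rfl
    rw [h1, ← Measure.map_apply (hmeas 0) .of_discrete, hlaw' 0, mu0_odd]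
  constructor
  · exact le_iInf fun n => sup_le_sup_left (iInf_le _ n) _
  · refine ⟨{ω | ξ 0 ω % 2 = 1}, ?_, ?_⟩
    · rw [MeasurableSpace.measurableSet_iInf]
      intro n
      exact A_meas ξ Y hY n
    · intro B hB hcon
      obtain ⟨C, hCY, hBC⟩ := approx_lemma P
        (⨆ k : {k : ℤ // k ≤ 0}, MeasurableSpace.comap (Y k.1) inferInstance)
        (⨅ n : {m : ℤ // m ≤ 0}, ⨆ k : {k : ℤ // k ≤ n.1},
          MeasurableSpace.comap (ξ k.1) inferInstance)
        (le_trans (iInf_le _ ⟨0, le_rfl⟩)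
          (iSup_le fun k : {k : ℤ // k ≤ (0:ℤ)} => (hmeas k.1).comap_le))
        (tail_triv P ξ hmeas hindep) B hB
      have hCamb : MeasurableSet C :=
        (iSup_le fun k : {k : ℤ // k ≤ 0} => (hYmeas k.1).comap_le) C hCY
      have hAC : P ({ω : Ω | ξ 0 ω % 2 = 1} ∆ C) = 0 := by
        have hsub : {ω : Ω | ξ 0 ω % 2 = 1} ∆ C
            ⊆ ({ω : Ω | ξ 0 ω % 2 = 1} ∆ B) ∪ (B ∆ C) := symmDiff_triangle _ B _
        refine le_antisymm (le_trans (measure_mono hsub) ?_) (zero_le)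
        refine le_trans (measure_union_le _ _) ?_
        rw [hcon, hBC, add_zero]
      have hd1 : P ({ω : Ω | ξ 0 ω % 2 = 1} \ C) = 0 :=
        measure_mono_null (by rw [Set.symmDiff_def] at hAC ⊢; exact Set.subset_union_left) hAC
      have hd2 : P (C \ {ω : Ω | ξ 0 ω % 2 = 1}) = 0 :=
        measure_mono_null (by rw [Set.symmDiff_def]; exact Set.subset_union_right) hAC
      have hPAC : P ({ω : Ω | ξ 0 ω % 2 = 1} ∩ C) = P {ω : Ω | ξ 0 ω % 2 = 1} := by
        have h := measure_inter_add_diff (μ := P) {ω : Ω | ξ 0 ω % 2 = 1} hCamb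
        rw [hd1, add_zero] at h
        exact h
      have hPC : P C = P {ω : Ω | ξ 0 ω % 2 = 1} := by
        have h := measure_inter_add_diff (μ := P) C hA
        rw [hd2, add_zero, Set.inter_comm, hPAC] at h
        exact h.symm
      have hind := key_indep' P ξ hmeas hindep hlaw' Y hY C hCY
      rw [hPAC, hPC, hPA] at hind
      have h2 := congrArg ENNReal.toReal hind
      rw [ENNReal.toReal_mul] at h2
      norm_num at h2
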